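/- arXiv:2309.11203 — 5 statements merged into one kernel-verified Lean document; each statement's English description precedes it below -/
import Mathlib

section
/- For every loopless matroid M on a finite ground set E, the maximal number of colors used by a Gallai coloring of M equals the rank of M. Precisely, rank(M) is the greatest element of the set of natural numbers k such that there exists a Gallai coloring ε of M whose image has exactly k elements (in particular some Gallai coloring uses exactly rank(M) colors, and no Gallai coloring uses more). -/
/-- A circuit of a matroid: a minimal dependent set. -/
def IsCircuit {α : Type*} (M : Matroid α) (C : Set α) : Prop :=
  M.Dep C ∧ ∀ D ⊂ C, ¬ M.Dep D

/-- A Gallai coloring of a matroid: a coloring of the ground set such that every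
circuit receives strictly fewer distinct colors than its size. -/
def IsGallaiColoring {α C : Type*} (M : Matroid α) (ε : α → C) : Prop :=
  ∀ X, IsCircuit M X → (ε '' X).ncard < X.ncard

/-- Every dependent set in a finitary setting contains a circuit. -/
lemma exists_circuit_subset_of_dep {α : Type*} [Fintype α] (M : Matroid α) :
    ∀ D : Set α, M.Dep D → ∃ C ⊆ D, IsCircuit M C := by
  intro D
  induction' hn : D.ncard using Nat.strong_induction_on with n IH generalizing D
  intro hD
  by_cases h : ∃ D' ⊂ D, M.Dep D'
  · obtain ⟨D', hss, hD'⟩ := h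
    have hlt : D'.ncard < D.ncard := Set.ncard_lt_ncard hss (Set.toFinite D)
    obtain ⟨C, hCD', hC⟩ := IH D'.ncard (hn ▸ hlt) D' rfl hD'
    exact ⟨C, hCD'.trans hss.subset, hC⟩
  · push_neg at h
    exact ⟨D, subset_rfl, hD, h⟩

/-- An element of a circuit is in the closure of the rest of the circuit. -/
lemma mem_closure_diff_of_circuit {α : Type*} [Fintype α] {M : Matroid α} {X : Set α}
    (hX : IsCircuit M X) {e : α} (he : e ∈ X) : e ∈ M.closure (X \ {e}) := by
  have hsub : X \ {e} ⊂ X := Set.sdiff_singleton_ssubset.mpr he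
  have hind : M.Indep (X \ {e}) :=
    (Matroid.not_dep_iff ((Set.diff_subset).trans hX.1.subset_ground)).mp (hX.2 _ hsub)
  rw [hind.mem_closure_iff_of_notMem (by simp)]
  rw [Set.insert_diff_singleton, Set.insert_eq_of_mem he]
  exact hX.1

/-- If a coloring is injective on a finite set, the image has the same cardinality;
contrapositive style helper: non-injectivity gives a strictly smaller image. -/
lemma ncard_image_lt_of_not_injOn {α β : Type*} {f : α → β} {s : Set α} (hs : s.Finite)
    (h : ¬ Set.InjOn f s) : (f '' s).ncard < s.ncard := by
  rcases lt_or_eq_of_le (Set.ncard_image_le hs) with hlt | heq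
  · exact hlt
  · exact absurd (Set.injOn_of_ncard_image_eq heq hs) h

/-- For a loopless matroid `M` on a finite ground set, the maximal number of colors
used by a Gallai coloring of `M` equals the rank of `M` (the common size of its
bases): for every base `B`, the cardinality of `B` is the greatest `k` such that
some Gallai coloring of `M` uses exactly `k` colors. -/
theorem gallai_max_colors_eq_rank {α : Type*} [Fintype α] (M : Matroid α)
    (hE : M.E = Set.univ)
    (hloopless : ∀ C, IsCircuit M C → C.ncard ≠ 1)
    (B : Set α) (hB : M.IsBase B) :
    IsGreatest {k : ℕ | ∃ ε : α → ℕ,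
      IsGallaiColoring M ε ∧ (Set.range ε).ncard = k} B.ncard := by
  classical
  constructor
  · -- construct a Gallai coloring with exactly B.ncard colors
    set ord : α → ℕ := fun a => (Fintype.equivFin α a : ℕ) with hord
    have hordinj : Function.Injective ord := by
      intro a b hab
      exact (Fintype.equivFin α).injective (Fin.ext hab)
    set Ble : ℕ → Set α := fun n => {b ∈ B | ord b ≤ n} with hBle
    have hBlemono : ∀ {m n : ℕ}, m ≤ n → Ble m ⊆ Ble n := by
      intro m n hmn x hx
      exact ⟨hx.1, hx.2.trans hmn⟩
    have hne : ∀ a : α, {n : ℕ | a ∈ M.closure (Ble n)}.Nonempty := by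
      intro a
      refine ⟨Fintype.card α, ?_⟩
      have hBsub : B ⊆ Ble (Fintype.card α) :=
        fun b hb => ⟨hb, le_of_lt (Fintype.equivFin α b).2⟩
      have : a ∈ M.closure B := by
        rw [hB.closure_eq, hE]; trivial
      exact M.closure_subset_closure hBsub this
    set ε : α → ℕ := fun a => sInf {n : ℕ | a ∈ M.closure (Ble n)} with hε
    have hspec : ∀ a : α, a ∈ M.closure (Ble (ε a)) := fun a => Nat.sInf_mem (hne a)
    have hmin : ∀ a : α, ∀ m < ε a, a ∉ M.closure (Ble m) :=
      fun a m hm => Nat.notMem_of_lt_sInf hm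
    -- ε agrees with ord on B
    have hεB : ∀ b ∈ B, ε b = ord b := by
      intro b hb
      have hle : ε b ≤ ord b := Nat.sInf_le (M.subset_closure (Ble (ord b))
        (by rw [hE]; exact Set.subset_univ _) ⟨hb, le_rfl⟩)
      rcases lt_or_eq_of_le hle with hlt | heq
      · exfalso
        have hsub : Ble (ε b) ⊆ B \ {b} := by
          intro x hx
          refine ⟨hx.1, ?_⟩
          intro hxb
          rw [Set.mem_singleton_iff] at hxb
          subst hxb
          exact absurd hx.2 (not_le.mpr hlt)
        exact hB.indep.notMem_closure_diff_of_mem hb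
          (M.closure_subset_closure hsub (hspec b))
      · exact heq
    have hrange : Set.range ε = ord '' B := by
      apply Set.Subset.antisymm
      · rintro c ⟨a, rfl⟩
        by_contra hc
        rcases Nat.eq_zero_or_eq_succ_pred (ε a) with h0 | hsucc
        · -- ε a = 0, so Ble 0 = ∅, so a is a loop
          have hBle0 : Ble 0 = (∅ : Set α) := by
            ext x
            simp only [hBle, Set.mem_setOf_eq, Set.mem_empty_iff_false, iff_false, not_and]
            intro hxB hx0
            exact hc ⟨x, hxB, by omega⟩
          have hacl : a ∈ M.closure (∅ : Set α) := by
            have := hspec a; rwa [h0, hBle0] at this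
          have hdep : M.Dep {a} := by
            have := (M.empty_indep.mem_closure_iff_of_notMem (Set.notMem_empty a)).mp hacl
            simpa using this
          have hcirc : IsCircuit M {a} := by
            refine ⟨hdep, ?_⟩
            intro D hD
            rw [Set.ssubset_singleton_iff.mp hD]
            exact M.empty_indep.not_dep
          exact hloopless {a} hcirc (Set.ncard_singleton a)
        · -- ε a = m + 1, but Ble (m+1) = Ble m, contradiction with minimality
          set m := (ε a) - 1 with hm
          have hεa : ε a = m + 1 := hsucc
          have hBleeq : Ble (m + 1) = Ble m := by
            apply Set.Subset.antisymm
            · intro x hx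
              refine ⟨hx.1, ?_⟩
              rcases lt_or_eq_of_le hx.2 with h | h
              · omega
              · exact absurd ⟨x, hx.1, h.trans hεa.symm⟩ hc
            · exact hBlemono (Nat.le_succ m)
          have := hspec a
          rw [hεa, hBleeq] at this
          exact hmin a m (by omega) this
      · rintro c ⟨b, hb, rfl⟩
        exact ⟨b, hεB b hb⟩
    refine ⟨ε, ?_, by rw [hrange, Set.ncard_image_of_injective _ hordinj]⟩
    -- Gallai property
    intro X hX
    apply ncard_image_lt_of_not_injOn (Set.toFinite X)
    intro hinj
    obtain ⟨e, heX, hemax⟩ := Set.exists_max_image X ε (Set.toFinite X) hX.1.nonempty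
    rcases Nat.eq_zero_or_eq_succ_pred (ε e) with h0 | hsucc
    · -- all colors 0, injective ⇒ X = {e}, circuit of size 1
      have hXe : X = {e} := by
        apply Set.Subset.antisymm
        · intro x hx
          have : ε x = ε e := le_antisymm (hemax x hx) (by omega)
          exact Set.mem_singleton_iff.mpr (hinj hx heX this)
        · simpa using heX
      exact hloopless X hX (by rw [hXe, Set.ncard_singleton])
    · set m := (ε e) - 1 with hm
      have hεe : ε e = m + 1 := hsucc
      have hXsub : X \ {e} ⊆ M.closure (Ble m) := by
        intro x hx
        have hxe : ε x ≠ ε e := fun h => hx.2 (hinj hx.1 heX h)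
        have : ε x ≤ m := by have := hemax x hx.1; omega
        exact M.closure_subset_closure (hBlemono this) (hspec x)
      have : e ∈ M.closure (Ble m) :=
        M.closure_subset_closure_of_subset_closure hXsub (mem_closure_diff_of_circuit hX heX)
      exact hmin e m (by omega) this
  · -- upper bound
    rintro k ⟨ε, hgallai, hk⟩
    rcases isEmpty_or_nonempty α with hα | hα
    · have hB0 : B = ∅ := Set.eq_empty_of_isEmpty B
      have : Set.range ε = ∅ := Set.range_eq_empty ε
      simp [← hk, this, hB0]
    · -- pick a representative for each color
      set S : Set α := Function.invFun ε '' Set.range ε with hS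
      have hinv : ∀ c ∈ Set.range ε, ε (Function.invFun ε c) = c :=
        fun c hc => Function.invFun_eq hc
      have hSinj : Set.InjOn (Function.invFun ε) (Set.range ε) := by
        intro c hc c' hc' h
        rw [← hinv c hc, ← hinv c' hc', h]
      have hScard : S.ncard = k := by
        rw [hS, Set.ncard_image_of_injOn hSinj, hk]
      have hεSinj : Set.InjOn ε S := by
        rintro x ⟨c, hc, rfl⟩ y ⟨c', hc', rfl⟩ h
        rw [hinv c hc, hinv c' hc'] at h
        rw [h]
      have hSindep : M.Indep S := by
        by_contra hnd
        have hdep : M.Dep S := (Matroid.dep_iff).mpr ⟨hnd, by rw [hE]; exact Set.subset_univ _⟩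
        obtain ⟨C, hCS, hC⟩ := exists_circuit_subset_of_dep M S hdep
        have := hgallai C hC
        rw [Set.ncard_image_of_injOn (hεSinj.mono hCS)] at this
        exact lt_irrefl _ this
      obtain ⟨B', hB', hSB'⟩ := hSindep.exists_isBase_superset
      have hcard : B'.ncard = B.ncard := by
        rw [Set.ncard_def, hB'.encard_eq_encard_of_isBase hB, ← Set.ncard_def]
      calc k = S.ncard := hScard.symm
        _ ≤ B'.ncard := Set.ncard_le_ncard hSB' (Set.toFinite B')
        _ = B.ncard := hcard
end

section
/- For every n ≥ 1, the maximal number of colors used by a transitive coloring of the transitive tournament on n vertices equals n − 1. Precisely, n − 1 is the greatest element of the set of natural numbers k for which there exists a transitive coloring ε of the edges {(i,j) : 1 ≤ i < j ≤ n} whose image has exactly k elements. -/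
/-- The edge set of the transitive tournament on `n` vertices:
ordered pairs `(i, j)` with `i < j`. -/
abbrev TournEdge (n : ℕ) := {p : Fin n × Fin n // p.1 < p.2}

/-- The edge `(a, b)` of the transitive tournament, for `a < b`. -/
def te {n : ℕ} (a b : Fin n) (h : a < b) : TournEdge n := ⟨(a, b), h⟩

/-- A coloring of the edges of the transitive tournament is transitive if
`ε(i,k) ∈ {ε(i,j), ε(j,k)}` for all `i < j < k`. -/
def IsTransitiveColoring {n : ℕ} {C : Type*} (ε : TournEdge n → C) : Prop :=
  ∀ (i j k : Fin n) (hij : i < j) (hjk : j < k),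
    ε (te i k (hij.trans hjk)) = ε (te i j hij) ∨
      ε (te i k (hij.trans hjk)) = ε (te j k hjk)

lemma succ_edge_color {n : ℕ} {ε : TournEdge n → ℕ} (hε : IsTransitiveColoring ε) :
    ∀ d (i k : Fin n) (h : i < k), k.val - i.val = d →
      ∃ (j : Fin n) (hj : j.val + 1 < n),
        ε (te i k h) = ε (te j ⟨j.val + 1, hj⟩ (by simp [Fin.lt_def])) := by
  intro d
  induction d using Nat.strong_induction_on with
  | _ d ih =>
    intro i k h hd
    have hik : i.val < k.val := h
    by_cases hsucc : k.val = i.val + 1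
    · refine ⟨i, by omega, ?_⟩
      congr 1
      simp only [te]
      congr 1
      ext <;> simp [hsucc]
    · have h1 : i.val + 1 < k.val := by omega
      set j : Fin n := ⟨i.val + 1, by omega⟩ with hj
      have hij : i < j := by simp [hj, Fin.lt_def]
      have hjk : j < k := by simp [hj, Fin.lt_def]; omega
      rcases hε i j k hij hjk with hc | hc
      · have := ih (j.val - i.val) (by omega) i j hij rfl
        rcases this with ⟨m, hm, hm'⟩
        exact ⟨m, hm, by rw [← hm']; rw [← hc]⟩
      · have := ih (k.val - j.val) (by omega) j k hjk rfl
        rcases this with ⟨m, hm, hm'⟩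
        exact ⟨m, hm, by rw [← hm']; rw [← hc]⟩

/-- The maximal number of colors used by a transitive coloring of the transitive
tournament on `n ≥ 1` vertices equals `n - 1`. -/
theorem max_colors_transitive_tournament (n : ℕ) (hn : 1 ≤ n) :
    IsGreatest {k : ℕ | ∃ ε : TournEdge n → ℕ,
      IsTransitiveColoring ε ∧ (Set.range ε).ncard = k} (n - 1) := by
  constructor
  · -- membership
    refine ⟨fun p => p.1.2.val, ?_, ?_⟩
    · intro i j k hij hjk
      right; rfl
    · have hr : Set.range (fun p : TournEdge n => p.1.2.val) = Set.Ico 1 n := by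
        ext m
        constructor
        · rintro ⟨⟨⟨i, j⟩, h⟩, rfl⟩
          have : i.val < j.val := h
          simp only [Set.mem_Ico]
          exact ⟨by omega, j.isLt⟩
        · intro hm
          simp only [Set.mem_Ico] at hm
          exact ⟨⟨(⟨0, by omega⟩, ⟨m, hm.2⟩), by simp [Fin.lt_def]; omega⟩, rfl⟩
      rw [hr, show Set.Ico 1 n = ↑(Finset.Ico 1 n) by simp, Set.ncard_coe_finset,
        Nat.card_Ico]
  · -- upper bound
    rintro k ⟨ε, hε, rfl⟩
    classical
    set g : Fin (n - 1) → ℕ := fun j =>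
      ε (te ⟨j.val, by omega⟩ ⟨j.val + 1, by omega⟩ (by simp [Fin.lt_def])) with hg
    have hsub : Set.range ε ⊆ ↑(Finset.univ.image g) := by
      rintro c ⟨⟨⟨i, kk⟩, h⟩, rfl⟩
      obtain ⟨j, hj, hj'⟩ := succ_edge_color hε (kk.val - i.val) i kk h rfl
      have hje : ε (⟨(i, kk), h⟩ : TournEdge n) = g ⟨j.val, by omega⟩ := by
        rw [hg]
        simp only
        convert hj' using 3
        rfl
      rw [hje]
      simp
    calc (Set.range ε).ncard ≤ (↑(Finset.univ.image g) : Set ℕ).ncard :=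
          Set.ncard_le_ncard hsub (Finset.univ.image g).finite_toSet
      _ = (Finset.univ.image g).card := Set.ncard_coe_finset _
      _ ≤ Finset.univ.card := Finset.card_image_le
      _ = n - 1 := by simp
end

section
/- Let M be a matroid on a finite nonempty ground set E. For each j ≥ 1, let a_j be the number of Gallai j-partitions of M, i.e., partitions of E into exactly j nonempty blocks B_1,…,B_j such that every circuit X of M satisfies |X ∩ B_i| ≥ 2 for at least one i. Then for every positive integer k, the number of Gallai colorings ε : E → {1,…,k} of M equals Σ_{j ≥ 1} a_j · k(k−1)⋯(k−j+1), where k(k−1)⋯(k−j+1) is the falling factorial. -/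
/-- A Gallai partition of a matroid: a partition of the ground set (encoded as a
setoid, whose classes are the nonempty blocks) such that every circuit `X`
satisfies `|X ∩ B| ≥ 2` for at least one block `B`, i.e. every circuit contains
two distinct elements lying in a common block. -/
def IsGallaiPartition {α : Type*} (M : Matroid α) (S : Setoid α) : Prop :=
  ∀ X, IsCircuit M X → ∃ e ∈ X, ∃ f ∈ X, e ≠ f ∧ S.r e f

section Aux

instance finiteSetoid {α : Type*} [Finite α] : Finite (Setoid α) :=
  Finite.of_injective (fun S : Setoid α => S.r) (by
    rintro ⟨r, _⟩ ⟨r', _⟩ h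
    cases h
    rfl)

/-- Functions with kernel exactly `S` correspond to injections from the quotient. -/
noncomputable def kerFiberEquiv {α β : Type*} (S : Setoid α) :
    {ε : α → β // Setoid.ker ε = S} ≃ (Quotient S ↪ β) where
  toFun ε := ⟨Quotient.lift ε.1 (fun x y hxy => by
      have h' : Setoid.ker ε.1 x y := by rw [ε.2]; exact hxy
      exact h'), by
    rintro ⟨x⟩ ⟨y⟩ h
    have h' : Setoid.ker ε.1 x y := h
    rw [ε.2] at h'
    exact Quotient.sound h'⟩
  invFun g := ⟨fun a => g ⟦a⟧, by
    ext x y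
    constructor
    · intro h
      exact Quotient.exact (g.injective (Setoid.ker_def.mp h))
    · intro h
      exact Setoid.ker_def.mpr (congrArg g (Quotient.sound h))⟩
  left_inv ε := Subtype.ext (funext fun a => rfl)
  right_inv g := by
    ext ⟨x⟩
    rfl

theorem gallai_coloring_iff_ker {α C : Type*} [Finite α] (M : Matroid α) (ε : α → C) :
    IsGallaiColoring M ε ↔ IsGallaiPartition M (Setoid.ker ε) := by
  constructor
  · intro h X hX
    have hfin : X.Finite := Set.toFinite X
    have hlt := h X hX
    by_contra hcon
    push_neg at hcon
    have hinj : Set.InjOn ε X := by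
      intro x hx y hy hxy
      by_contra hne
      exact (hcon x hx y hy hne) (Setoid.ker_def.mpr hxy)
    rw [Set.ncard_image_of_injOn hinj] at hlt
    exact lt_irrefl _ hlt
  · intro h X hX
    obtain ⟨e, he, f, hf, hef, hr⟩ := h X hX
    have hfin : X.Finite := Set.toFinite X
    have hle : (ε '' X).ncard ≤ X.ncard := Set.ncard_image_le hfin
    rcases lt_or_eq_of_le hle with h' | h'
    · exact h'
    · exfalso
      have := Set.injOn_of_ncard_image_eq h' hfin
      exact hef (this he hf (Setoid.ker_def.mp hr))

theorem card_quotient_pos {α : Type*} [Finite α] [Nonempty α] (S : Setoid α) :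
    1 ≤ Nat.card (Quotient S) := by
  haveI : Nonempty (Quotient S) := ⟨⟦Classical.arbitrary α⟧⟩
  exact Nat.one_le_iff_ne_zero.mpr (Nat.card_ne_zero.mpr ⟨inferInstance, inferInstance⟩)

theorem card_quotient_le {α : Type*} [Finite α] (S : Setoid α) :
    Nat.card (Quotient S) ≤ Nat.card α :=
  Nat.card_le_card_of_surjective (Quotient.mk S) Quotient.mk_surjective

end Aux

/-- For a matroid `M` on a finite nonempty ground set, the number of Gallai
colorings of `M` with colors in `{1, …, k}` equals
`Σ_{j ≥ 1} a_j · k(k-1)⋯(k-j+1)`, where `a_j` is the number of Gallai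
`j`-partitions of `M` and `k(k-1)⋯(k-j+1)` is the falling factorial. -/
theorem card_gallai_colorings_eq_sum_descFactorial {α : Type*} [Fintype α]
    [Nonempty α] (M : Matroid α) (hE : M.E = Set.univ)
    (a : ℕ → ℕ)
    (ha : ∀ j, a j = Nat.card {S : Setoid α //
      Nat.card (Quotient S) = j ∧ IsGallaiPartition M S})
    (k : ℕ) (hk : 1 ≤ k) :
    Nat.card {ε : α → Fin k // IsGallaiColoring M ε} =
      ∑ᶠ j ∈ Set.Ici 1, a j * Nat.descFactorial k j := by
  classical
  set N := Fintype.card α with hN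
  set d : ℕ → ℕ := fun j => a j * Nat.descFactorial k j with hd
  -- Fintype instance for Setoid α
  haveI : Fintype (Setoid α) := Fintype.ofFinite _
  -- Step 1: decompose colorings by their kernel
  have step1 : Nat.card {ε : α → Fin k // IsGallaiColoring M ε} =
      ∑ S : Setoid α, Nat.card {ε : α → Fin k //
        IsGallaiColoring M ε ∧ Setoid.ker ε = S} := by
    have e := (Equiv.sigmaFiberEquiv (fun ε : {ε : α → Fin k // IsGallaiColoring M ε} =>
      Setoid.ker ε.1)).symm.trans
      (Equiv.sigmaCongrRight fun S =>
        ((Equiv.subtypeSubtypeEquivSubtypeInter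
          (fun ε : α → Fin k => IsGallaiColoring M ε)
          (fun ε => Setoid.ker ε = S))))
    rw [Nat.card_congr e, Nat.card_eq_fintype_card, Fintype.card_sigma]
    exact Finset.sum_congr rfl fun S _ => (Nat.card_eq_fintype_card).symm
  -- Step 2: compute each fiber
  have step2 : ∀ S : Setoid α, Nat.card {ε : α → Fin k //
      IsGallaiColoring M ε ∧ Setoid.ker ε = S} =
      if IsGallaiPartition M S then Nat.descFactorial k (Nat.card (Quotient S)) else 0 := by
    intro S
    by_cases hS : IsGallaiPartition M S
    · rw [if_pos hS]
      have e1 : {ε : α → Fin k // IsGallaiColoring M ε ∧ Setoid.ker ε = S} ≃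
          {ε : α → Fin k // Setoid.ker ε = S} := by
        apply Equiv.subtypeEquivRight
        intro ε
        constructor
        · exact fun h => h.2
        · intro h
          exact ⟨(gallai_coloring_iff_ker M ε).mpr (h ▸ hS), h⟩
      rw [Nat.card_congr (e1.trans (kerFiberEquiv S))]
      haveI : Fintype (Quotient S) := Fintype.ofFinite _
      rw [Nat.card_eq_fintype_card, Fintype.card_embedding_eq, Fintype.card_fin,
        Nat.card_eq_fintype_card]
    · rw [if_neg hS]
      rw [Nat.card_eq_zero]
      left
      constructor
      rintro ⟨ε, hε, hker⟩
      exact hS (hker ▸ (gallai_coloring_iff_ker M ε).mp hε)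
  -- Step 3: rewrite the RHS as a finite sum over Icc 1 N
  have step3 : ∑ᶠ j ∈ Set.Ici 1, d j = ∑ j ∈ Finset.Icc 1 N, d j := by
    apply finsum_mem_eq_sum_of_inter_support_eq
    ext j
    simp only [Set.mem_inter_iff, Set.mem_Ici, Function.mem_support, Finset.coe_Icc,
      Set.mem_Icc]
    constructor
    · rintro ⟨h1, h2⟩
      refine ⟨⟨h1, ?_⟩, h2⟩
      by_contra hj
      push_neg at hj
      apply h2
      have : a j = 0 := by
        rw [ha j, Nat.card_eq_zero]
        left
        constructor
        rintro ⟨S, hSj, -⟩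
        have h1 := card_quotient_le S
        have h2 : Nat.card α = N := Nat.card_eq_fintype_card
        omega
      simp [hd, this]
    · rintro ⟨⟨h1, _⟩, h2⟩
      exact ⟨h1, h2⟩
  -- Step 4: group the sum over setoids by the number of blocks
  have step4 : ∑ S : Setoid α,
      (if IsGallaiPartition M S then Nat.descFactorial k (Nat.card (Quotient S)) else 0) =
      ∑ j ∈ Finset.Icc 1 N, d j := by
    rw [← Finset.sum_fiberwise_of_maps_to (g := fun S : Setoid α => Nat.card (Quotient S))
      (t := Finset.Icc 1 N) (by
        intro S _
        simp only [Finset.mem_Icc]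
        refine ⟨card_quotient_pos S, ?_⟩
        have h1 := card_quotient_le S
        have h2 : Nat.card α = N := Nat.card_eq_fintype_card
        omega)]
    apply Finset.sum_congr rfl
    intro j _
    have : ∀ S ∈ Finset.univ.filter (fun S : Setoid α => Nat.card (Quotient S) = j),
        (if IsGallaiPartition M S then Nat.descFactorial k (Nat.card (Quotient S)) else 0) =
        (if IsGallaiPartition M S then Nat.descFactorial k j else 0) := by
      intro S hS
      simp only [Finset.mem_filter] at hS
      rw [hS.2]
    rw [Finset.sum_congr rfl this, ← Finset.sum_filter, Finset.sum_const,
      smul_eq_mul, Finset.filter_filter]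
    have hcard : (Finset.univ.filter (fun S : Setoid α =>
        Nat.card (Quotient S) = j ∧ IsGallaiPartition M S)).card = a j := by
      rw [ha j, Nat.card_eq_fintype_card, Fintype.card_subtype]
    rw [hcard]
  rw [step1]
  rw [Finset.sum_congr rfl (fun S _ => step2 S)]
  rw [step4, ← step3]
end

section
/- Let E be a finite set of vectors in ℝ^d such that 0 does not lie in the convex hull of E. Call a function ε : E → {−1, +1} transitive if for all nonempty disjoint subsets S, T ⊆ E for which there exist strictly positive real coefficients (a_s)_{s∈S} and (b_t)_{t∈T} with Σ_{s∈S} a_s s = Σ_{t∈T} b_t t, there exist s ∈ S and t ∈ T with ε(s) = ε(t). Then the number of transitive functions ε : E → {−1, +1} equals the number of functions σ : E → {−1, +1} for which there exists a point x ∈ ℝ^d with σ(e)·⟨x, e⟩ > 0 for every e ∈ E (such σ are exactly the sign vectors of the chambers of the hyperplane arrangement {e^⊥ : e ∈ E}, so this number is the number of chambers of the dual arrangement). -/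
/-- A `±1`-valued function on a finite set `E` of vectors is transitive if, whenever
two nonempty disjoint subsets `S, T ⊆ E` admit strictly positive coefficients with
equal positive combinations (`Σ_{s∈S} a_s s = Σ_{t∈T} b_t t`), some `s ∈ S` and
`t ∈ T` receive the same sign. -/
def IsTransitiveSign {d : ℕ} (E : Finset (EuclideanSpace ℝ (Fin d)))
    (ε : E → ℝ) : Prop :=
  ∀ S T : Finset E, S.Nonempty → T.Nonempty → Disjoint S T →
    (∃ (a b : E → ℝ), (∀ s ∈ S, 0 < a s) ∧ (∀ t ∈ T, 0 < b t) ∧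
      ∑ s ∈ S, a s • (s : EuclideanSpace ℝ (Fin d)) =
        ∑ t ∈ T, b t • (t : EuclideanSpace ℝ (Fin d))) →
    ∃ s ∈ S, ∃ t ∈ T, ε s = ε t

open Finset

noncomputable section

abbrev V (d : ℕ) := EuclideanSpace ℝ (Fin d)

lemma sep_of_not_mem_hull {d : ℕ} (t : Finset (V d))
    (h : (0 : V d) ∉ convexHull ℝ (t : Set (V d))) :
    ∃ x : V d, ∀ v ∈ t, 0 < (inner ℝ x v : ℝ) := by
  obtain ⟨f, u, hu, hf⟩ := geometric_hahn_banach_point_closed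
    (convex_convexHull ℝ _) (t.finite_toSet.isCompact_convexHull (𝕜 := ℝ)).isClosed h
  refine ⟨(InnerProductSpace.toDual ℝ _).symm f, fun v hv => ?_⟩
  rw [InnerProductSpace.toDual_symm_apply]
  have h2 := hf v (subset_convexHull ℝ _ hv)
  have h0 : f 0 = 0 := map_zero f
  linarith

lemma transitive_of_realizable {d : ℕ} (E : Finset (V d))
    (ε : E → ℝ) (hpm : ∀ e, ε e = 1 ∨ ε e = -1)
    (x : V d) (hx : ∀ e : E, 0 < ε e * (inner ℝ x (e : V d) : ℝ)) :
    IsTransitiveSign E ε := by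
  rintro S T hS hT hST ⟨a, b, ha, hb, hab⟩
  by_contra hc
  push_neg at hc
  obtain ⟨s₀, hs₀⟩ := hS
  obtain ⟨t₀, ht₀⟩ := hT
  have hsval : ∀ s ∈ S, ε s = -ε t₀ := by
    intro s hs
    have := hc s hs t₀ ht₀
    rcases hpm s with h1 | h1 <;> rcases hpm t₀ with h2 | h2 <;>
      simp [h1, h2] at this ⊢
  have htval : ∀ t ∈ T, ε t = ε t₀ := by
    intro t ht
    have := hc s₀ hs₀ t ht
    have hs0 := hsval s₀ hs₀
    rcases hpm t with h1 | h1 <;> rcases hpm t₀ with h2 | h2 <;>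
      simp [h1, h2] at this hs0 ⊢ <;>
      exact absurd (hs0 ▸ hc s₀ hs₀ t ht) (by simp [h1, hs0])
  have hL : 0 < (-ε t₀) * (inner ℝ x (∑ s ∈ S, a s • (s : V d)) : ℝ) := by
    rw [inner_sum]
    simp_rw [real_inner_smul_right]
    rw [Finset.mul_sum]
    apply Finset.sum_pos
    · intro s hs
      have h1 := hx s
      have h2 := ha s hs
      rw [← hsval s hs]
      nlinarith
    · exact ⟨s₀, hs₀⟩
  have hR : 0 < (ε t₀) * (inner ℝ x (∑ t ∈ T, b t • (t : V d)) : ℝ) := by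
    rw [inner_sum]
    simp_rw [real_inner_smul_right]
    rw [Finset.mul_sum]
    apply Finset.sum_pos
    · intro t ht
      have h1 := hx t
      have h2 := hb t ht
      rw [← htval t ht]
      nlinarith
    · exact ⟨t₀, ht₀⟩
  rw [hab] at hL
  nlinarith

lemma not_mem_hull_of_transitive {d : ℕ} [DecidableEq (V d)] (E : Finset (V d))
    (hE : (0 : V d) ∉ convexHull ℝ (E : Set (V d)))
    (ε : E → ℝ) (hpm : ∀ e, ε e = 1 ∨ ε e = -1) (htr : IsTransitiveSign E ε) :
    (0 : V d) ∉ convexHull ℝ ((E.attach.image (fun e => ε e • (e : V d))) : Set (V d)) := by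
  set g : E → V d := fun e => ε e • (e : V d) with hg
  intro hmem
  rw [Finset.mem_convexHull'] at hmem
  obtain ⟨w, hw0, hw1, hwsum⟩ := hmem
  set timg := E.attach.image g with htimg
  have htne : timg.Nonempty := by
    by_contra hne
    rw [Finset.not_nonempty_iff_eq_empty] at hne
    rw [hne] at hw1; simp at hw1
  have hEne : Nonempty {x // x ∈ E} := by
    obtain ⟨y, hy⟩ := htne
    obtain ⟨e, -, -⟩ := Finset.mem_image.1 hy
    exact ⟨e⟩
  set h : V d → {x // x ∈ E} := Function.invFun g with hh
  have hgh : ∀ y ∈ timg, g (h y) = y := by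
    intro y hy
    obtain ⟨e, -, he⟩ := Finset.mem_image.1 hy
    exact Function.invFun_eq ⟨e, he⟩
  have hinj : ∀ y₁ ∈ timg, ∀ y₂ ∈ timg, h y₁ = h y₂ → y₁ = y₂ := by
    intro y₁ h₁ y₂ h₂ hq
    rw [← hgh y₁ h₁, ← hgh y₂ h₂, hq]
  set F1 := timg.filter (fun y => 0 < w y ∧ ε (h y) = 1) with hF1
  set F2 := timg.filter (fun y => 0 < w y ∧ ¬ (ε (h y) = 1)) with hF2
  have hval1 : ∀ y ∈ F1, ((h y : V d)) = y := by
    intro y hy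
    rw [hF1, Finset.mem_filter] at hy
    have := hgh y hy.1
    rw [hg] at this
    simp only at this
    rw [hy.2.2] at this
    simpa using this
  have hval2 : ∀ y ∈ F2, ((h y : V d)) = -y := by
    intro y hy
    rw [hF2, Finset.mem_filter] at hy
    have := hgh y hy.1
    have hm1 : ε (h y) = -1 := (hpm (h y)).resolve_left hy.2.2
    rw [hg] at this
    simp only at this
    rw [hm1] at this
    simp only [neg_smul, one_smul] at this
    exact neg_eq_iff_eq_neg.mp this
  have hsplit : ∑ y ∈ F1, w y • y + ∑ y ∈ F2, w y • y = 0 := by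
    have hpos : ∑ y ∈ timg.filter (fun y => 0 < w y), w y • y = 0 := by
      rw [← hwsum]
      apply Finset.sum_subset (Finset.filter_subset _ _)
      intro y hy hy2
      rw [Finset.mem_filter, not_and] at hy2
      have : w y = 0 := le_antisymm (not_lt.1 (hy2 hy)) (hw0 y hy)
      simp [this]
    have e1 : (timg.filter (fun y => 0 < w y)).filter (fun y => ε (h y) = 1) = F1 := by
      rw [Finset.filter_filter]
    have e2 : (timg.filter (fun y => 0 < w y)).filter (fun y => ¬ (ε (h y) = 1)) = F2 := by
      rw [Finset.filter_filter]
    rw [← hpos, ← Finset.sum_filter_add_sum_filter_not (timg.filter (fun y => 0 < w y))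
      (fun y => ε (h y) = 1), e1, e2]
  -- the subsets S and T of E
  set S := F1.image h with hS
  set T := F2.image h with hT
  have hsum1 : ∑ s ∈ S, w (g s) • (s : V d) = ∑ y ∈ F1, w y • y := by
    rw [hS, Finset.sum_image (fun y₁ h₁ y₂ h₂ => hinj y₁ (Finset.filter_subset _ _ h₁)
      y₂ (Finset.filter_subset _ _ h₂))]
    apply Finset.sum_congr rfl
    intro y hy
    rw [hgh y (Finset.filter_subset _ _ hy), hval1 y hy]
  have hsum2 : ∑ t ∈ T, w (g t) • (t : V d) = -∑ y ∈ F2, w y • y := by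
    rw [hT, Finset.sum_image (fun y₁ h₁ y₂ h₂ => hinj y₁ (Finset.filter_subset _ _ h₁)
      y₂ (Finset.filter_subset _ _ h₂)), ← Finset.sum_neg_distrib]
    apply Finset.sum_congr rfl
    intro y hy
    rw [hgh y (Finset.filter_subset _ _ hy), hval2 y hy]
    simp
  have hsplitw : ∑ y ∈ F1, w y + ∑ y ∈ F2, w y = 1 := by
    have hpos : ∑ y ∈ timg.filter (fun y => 0 < w y), w y = 1 := by
      rw [← hw1]
      apply Finset.sum_subset (Finset.filter_subset _ _)
      intro y hy hy2
      rw [Finset.mem_filter, not_and] at hy2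
      exact le_antisymm (not_lt.1 (hy2 hy)) (hw0 y hy)
    have e1 : (timg.filter (fun y => 0 < w y)).filter (fun y => ε (h y) = 1) = F1 := by
      rw [Finset.filter_filter]
    have e2 : (timg.filter (fun y => 0 < w y)).filter (fun y => ¬ (ε (h y) = 1)) = F2 := by
      rw [Finset.filter_filter]
    rw [← hpos, ← Finset.sum_filter_add_sum_filter_not (timg.filter (fun y => 0 < w y))
      (fun y => ε (h y) = 1), e1, e2]
  -- nonemptiness via hE
  have hF1ne : F1.Nonempty := by
    by_contra hne
    rw [Finset.not_nonempty_iff_eq_empty] at hne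
    rw [hne, Finset.sum_empty, zero_add] at hsplit
    rw [hne, Finset.sum_empty, zero_add] at hsplitw
    apply hE
    have h0 : F2.centerMass w (fun y => ((h y : V d))) = 0 := by
      rw [Finset.centerMass_eq_of_sum_1 _ _ hsplitw]
      have : ∑ y ∈ F2, w y • ((h y : V d)) = ∑ y ∈ F2, w y • (-y) :=
        Finset.sum_congr rfl fun y hy => by rw [hval2 y hy]
      rw [this]
      simp only [smul_neg, Finset.sum_neg_distrib, hsplit, neg_zero]
    rw [← h0]
    exact Finset.centerMass_mem_convexHull _
      (fun y hy => hw0 y (Finset.filter_subset _ _ hy))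
      (by rw [hsplitw]; norm_num) (fun y hy => (h y).2)
  have hF2ne : F2.Nonempty := by
    by_contra hne
    rw [Finset.not_nonempty_iff_eq_empty] at hne
    rw [hne, Finset.sum_empty, add_zero] at hsplit
    rw [hne, Finset.sum_empty, add_zero] at hsplitw
    apply hE
    have h0 : F1.centerMass w (fun y => ((h y : V d))) = 0 := by
      rw [Finset.centerMass_eq_of_sum_1 _ _ hsplitw]
      have : ∑ y ∈ F1, w y • ((h y : V d)) = ∑ y ∈ F1, w y • y :=
        Finset.sum_congr rfl fun y hy => by rw [hval1 y hy]
      rw [this, hsplit]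
    rw [← h0]
    exact Finset.centerMass_mem_convexHull _
      (fun y hy => hw0 y (Finset.filter_subset _ _ hy))
      (by rw [hsplitw]; norm_num) (fun y hy => (h y).2)
  -- disjointness
  have hdisj : Disjoint S T := by
    rw [Finset.disjoint_left]
    intro s hsS hsT
    obtain ⟨y1, hy1, he1⟩ := Finset.mem_image.1 hsS
    obtain ⟨y2, hy2, he2⟩ := Finset.mem_image.1 hsT
    rw [hF1, Finset.mem_filter] at hy1
    rw [hF2, Finset.mem_filter] at hy2
    exact hy2.2.2 (by rw [he2, ← he1]; exact hy1.2.2)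
  -- apply transitivity
  have hA : ∀ s ∈ S, 0 < w (g s) := by
    intro s hsS
    obtain ⟨y, hy, he⟩ := Finset.mem_image.1 hsS
    have hyt : y ∈ timg := Finset.filter_subset _ _ hy
    rw [← he, hgh y hyt]
    rw [hF1, Finset.mem_filter] at hy
    exact hy.2.1
  have hB : ∀ t ∈ T, 0 < w (g t) := by
    intro t htT
    obtain ⟨y, hy, he⟩ := Finset.mem_image.1 htT
    have hyt : y ∈ timg := Finset.filter_subset _ _ hy
    rw [← he, hgh y hyt]
    rw [hF2, Finset.mem_filter] at hy
    exact hy.2.1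
  have hEQ : ∑ s ∈ S, w (g s) • (s : V d) = ∑ t ∈ T, w (g t) • (t : V d) := by
    rw [hsum1, hsum2]
    exact eq_neg_of_add_eq_zero_left hsplit
  obtain ⟨s, hs, t, ht, heq⟩ := htr S T (hF1ne.image h) (hF2ne.image h) hdisj
    ⟨fun s => w (g s), fun t => w (g t), hA, hB, hEQ⟩
  obtain ⟨y1, hy1, he1⟩ := Finset.mem_image.1 hs
  obtain ⟨y2, hy2, he2⟩ := Finset.mem_image.1 ht
  rw [hF1, Finset.mem_filter] at hy1
  rw [hF2, Finset.mem_filter] at hy2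
  rw [← he1, hy1.2.2] at heq
  exact hy2.2.2 (by rw [he2, ← heq])

/-- Let `E` be a finite set of vectors in `ℝ^d` with `0` not in the convex hull of
`E`.  The number of transitive functions `ε : E → {−1, +1}` equals the number of
functions `σ : E → {−1, +1}` realized as the sign vector of some point `x ∈ ℝ^d`
(i.e. with `σ(e)·⟨x, e⟩ > 0` for all `e ∈ E`); the latter is the number of
chambers of the hyperplane arrangement dual to `E`. -/
theorem card_transitive_signs_eq_card_chambers (d : ℕ)
    (E : Finset (EuclideanSpace ℝ (Fin d)))
    (hE : (0 : EuclideanSpace ℝ (Fin d)) ∉ convexHull ℝ (E : Set (EuclideanSpace ℝ (Fin d)))) :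
    Nat.card {ε : E → ℝ //
        (∀ e, ε e = 1 ∨ ε e = -1) ∧ IsTransitiveSign E ε} =
      Nat.card {σ : E → ℝ //
        (∀ e, σ e = 1 ∨ σ e = -1) ∧
        ∃ x : EuclideanSpace ℝ (Fin d), ∀ e : E,
          0 < σ e * (inner ℝ x (e : EuclideanSpace ℝ (Fin d)) : ℝ)} := by
  classical
  apply Nat.card_congr
  apply Equiv.subtypeEquivRight
  intro ε
  apply and_congr_right
  intro hpm
  constructor
  · intro htr
    obtain ⟨x, hx⟩ := sep_of_not_mem_hull _ (not_mem_hull_of_transitive E hE ε hpm htr)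
    refine ⟨x, fun e => ?_⟩
    have := hx (ε e • (e : V d)) (Finset.mem_image.2 ⟨e, Finset.mem_attach _ _, rfl⟩)
    rwa [real_inner_smul_right] at this
  · rintro ⟨x, hx⟩
    exact transitive_of_realizable E ε hpm x hx


end
end

section
/- For every n ≥ 1, the number of transitive 2-colorings of the transitive tournament on n vertices, i.e., the number of functions ε : {(i,j) : 1 ≤ i < j ≤ n} → {1,2} such that ε(i,k) ∈ {ε(i,j), ε(j,k)} for all 1 ≤ i < j < k ≤ n, equals n!. -/
def Cop (n : ℕ) : Type := Fin n

instance (n : ℕ) : Fintype (Cop n) := inferInstanceAs (Fintype (Fin n))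

def colOf {n : ℕ} (σ : Equiv.Perm (Fin n)) : TournEdge n → Fin 2 :=
  fun e => if σ e.1.1 < σ e.1.2 then 0 else 1

lemma colOf_trans {n : ℕ} (σ : Equiv.Perm (Fin n)) : IsTransitiveColoring (colOf σ) := by
  intro i j k hij hjk
  simp only [colOf, te]
  by_cases hik : σ i < σ k
  · by_cases h1 : σ i < σ j
    · left; simp [hik, h1]
    · right; simp [hik, lt_of_le_of_lt (not_lt.1 h1) hik]
  · by_cases h1 : σ i < σ j
    · right
      have h2 : ¬ σ j < σ k := fun h => hik (h1.trans h)
      simp [hik, h2]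
    · left; simp [hik, h1]

lemma colOf_inj {n : ℕ} : Function.Injective (colOf (n := n)) := by
  intro σ τ h
  have key : ∀ i j : Fin n, σ i < σ j ↔ τ i < τ j := by
    have base : ∀ i j : Fin n, i < j → (σ i < σ j ↔ τ i < τ j) := by
      intro i j hij
      have := congrFun h (te i j hij)
      simp only [colOf, te] at this
      by_cases h1 : σ i < σ j <;> by_cases h2 : τ i < τ j <;> simp [h1, h2] at this ⊢
    intro i j
    rcases lt_trichotomy i j with hij | rfl | hij
    · exact base i j hij
    · simp
    · have := base j i hij
      constructor
      · intro hs
        rcases lt_trichotomy (τ i) (τ j) with h' | h' | h'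
        · exact h'
        · exact absurd (τ.injective h') (fun e => by subst e; exact lt_irrefl _ hs)
        · exact absurd (this.2 h') (not_lt.2 hs.le)
      · intro hs
        rcases lt_trichotomy (σ i) (σ j) with h' | h' | h'
        · exact h'
        · exact absurd (σ.injective h') (fun e => by subst e; exact lt_irrefl _ hs)
        · exact absurd (this.1 h') (not_lt.2 hs.le)
  have hsm : StrictMono (fun i => τ (σ.symm i) : Fin n → Fin n) := by
    intro a b hab
    exact (key _ _).1 (by simpa using hab)
  have hid : (fun i => τ (σ.symm i) : Fin n → Fin n) = (id : Fin n → Fin n) := by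
    have wf : WellFoundedLT (Fin n) := inferInstance
    refine (@StrictMono.range_inj (Fin n) (Fin n) inferInstance inferInstance wf _ id hsm strictMono_id).1 ?_
    have : Function.Surjective (fun i => τ (σ.symm i) : Fin n → Fin n) :=
      τ.surjective.comp σ.symm.surjective
    simp [Set.range_eq_univ.2 this, Set.range_id]
  ext i
  have := congrFun hid (σ i)
  simp only [Equiv.symm_apply_apply, id_eq] at this
  exact congrArg Fin.val this.symm


/-- The number of transitive 2-colorings of the transitive tournament on `n ≥ 1`
vertices equals `n!`. -/
theorem card_transitive_two_colorings (n : ℕ) (hn : 1 ≤ n) :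
    Nat.card {ε : TournEdge n → Fin 2 // IsTransitiveColoring ε} = Nat.factorial n := by
  have hsurj : ∀ ε : TournEdge n → Fin 2, IsTransitiveColoring ε →
      ∃ σ : Equiv.Perm (Fin n), colOf σ = ε := by
    intro ε hε
    classical
    -- the relation "i comes before j"
    set r : Fin n → Fin n → Prop := fun i j =>
      if h : i < j then ε (te i j h) = 0 else if h' : j < i then ε (te j i h') = 1 else False
      with hrdef
    have hr_lt : ∀ {i j : Fin n} (h : i < j), r i j ↔ ε (te i j h) = 0 := by
      intro i j h; simp [hrdef, h]
    have hr_gt : ∀ {i j : Fin n} (h : j < i), r i j ↔ ε (te j i h) = 1 := by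
      intro i j h; simp [hrdef, h, asymm h]
    have two : ∀ e : TournEdge n, ε e = 0 ∨ ε e = 1 := by
      intro e; omega
    have hirr : ∀ i : Fin n, ¬ r i i := by
      intro i; simp [hrdef]
    have htri : ∀ i j : Fin n, r i j ∨ i = j ∨ r j i := by
      intro i j
      rcases lt_trichotomy i j with h | h | h
      · rcases two (te i j h) with h0 | h1
        · exact Or.inl ((hr_lt h).2 h0)
        · exact Or.inr (Or.inr ((hr_gt h).2 h1))
      · exact Or.inr (Or.inl h)
      · rcases two (te j i h) with h0 | h1
        · exact Or.inr (Or.inr ((hr_lt h).2 h0))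
        · exact Or.inl ((hr_gt h).2 h1)
    have htrans : ∀ a b c : Fin n, r a b → r b c → r a c := by
      intro a b c hab hbc
      have hne_ab : a ≠ b := fun e => hirr a (e ▸ hab)
      have hne_bc : b ≠ c := fun e => hirr b (e ▸ hbc)
      rcases lt_trichotomy a b with h1 | h1 | h1
      · rcases lt_trichotomy b c with h2 | h2 | h2
        · -- a < b < c
          have e1 := (hr_lt h1).1 hab
          have e2 := (hr_lt h2).1 hbc
          have := hε a b c h1 h2
          refine (hr_lt (h1.trans h2)).2 ?_
          rcases this with h | h <;> omega
        · exact absurd h2 hne_bc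
        · -- a < b, c < b
          have e1 := (hr_lt h1).1 hab
          have e2 := (hr_gt h2).1 hbc
          rcases lt_trichotomy a c with h3 | h3 | h3
          · -- a < c < b
            have := hε a c b h3 h2
            refine (hr_lt h3).2 ?_
            rcases this with h | h <;> omega
          · -- a = c impossible: ε(a,b)=0 and ε(c,b)=1
            subst h3; omega
          · -- c < a < b
            have := hε c a b h3 h1
            refine (hr_gt h3).2 ?_
            rcases this with h | h <;> omega
      · exact absurd h1 hne_ab
      · rcases lt_trichotomy b c with h2 | h2 | h2
        · -- b < a, b < c
          have e1 := (hr_gt h1).1 hab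
          have e2 := (hr_lt h2).1 hbc
          rcases lt_trichotomy a c with h3 | h3 | h3
          · -- b < a < c
            have := hε b a c h1 h3
            refine (hr_lt h3).2 ?_
            rcases this with h | h <;> omega
          · subst h3; omega
          · -- b < c < a
            have := hε b c a h2 h3
            refine (hr_gt h3).2 ?_
            rcases this with h | h <;> omega
        · exact absurd h2 hne_bc
        · -- c < b < a
          have e1 := (hr_gt h1).1 hab
          have e2 := (hr_gt h2).1 hbc
          have := hε c b a h2 h1
          refine (hr_gt (h2.trans h1)).2 ?_
          rcases this with h | h <;> omega
    haveI hsto : IsStrictTotalOrder (Cop n) r :=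
      { irrefl := hirr, trans := htrans, trichotomous := fun a b h1 h2 => (htri a b).elim (fun h => absurd h h1) (fun h => h.elim id (fun h => absurd h h2)) }
    letI ord : LinearOrder (Cop n) := linearOrderOfSTO r
    have hcard : Fintype.card (Cop n) = n := Fintype.card_fin n
    let e : Fin n ≃o Cop n := monoEquivOfFin (Cop n) hcard
    have hlt : ∀ x y : Cop n, x < y ↔ r x y := fun _ _ => Iff.rfl
    refine ⟨(e.toEquiv.symm : Cop n ≃ Fin n), ?_⟩
    funext ed
    obtain ⟨⟨i, j⟩, hij⟩ := ed
    have key : e.symm i < e.symm j ↔ r i j := by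
      rw [← hlt i j]
      exact e.symm.lt_iff_lt
    simp only [colOf]
    split_ifs with hlt2
    · exact ((hr_lt hij).1 (key.1 hlt2)).symm
    · rcases two ⟨(i, j), hij⟩ with h0 | h1
      · exact absurd (key.2 ((hr_lt hij).2 h0)) hlt2
      · exact h1.symm
  have hbij : Function.Bijective
      (fun σ : Equiv.Perm (Fin n) => (⟨colOf σ, colOf_trans σ⟩ :
        {ε : TournEdge n → Fin 2 // IsTransitiveColoring ε})) := by
    constructor
    · intro a b hab
      exact colOf_inj (congrArg Subtype.val hab)
    · rintro ⟨ε, hε⟩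
      obtain ⟨σ, hσ⟩ := hsurj ε hε
      exact ⟨σ, Subtype.ext hσ⟩
  rw [← Nat.card_eq_of_bijective _ hbij, Nat.card_eq_fintype_card,
    Fintype.card_perm, Fintype.card_fin]
end
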